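/- If a stratified Lie algebra g of type (◇) admits a step-2 subalgebra h such that h ∩ V_1 has codimension 1 in V_1, then g is of type (⋆). -/
import Mathlib


/-- The span of all brackets `⁅x, y⁆` with `x ∈ A` and `y ∈ B`. -/
def lieSpan {L : Type} [LieRing L] [LieAlgebra ℝ L] (A B : Submodule ℝ L) :
    Submodule ℝ L :=
  Submodule.span ℝ {z : L | ∃ x ∈ A, ∃ y ∈ B, z = ⁅x, y⁆}

/-- A stratification of step `s` on a Lie algebra `L`: a decomposition
`L = V 1 ⊕ ⋯ ⊕ V s` (the direct sum being recorded by spanning and independence)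
with `[V 1, V j] = V (j+1)` for `1 ≤ j < s`, `[V 1, V s] = 0` and `V s ≠ 0`.
Layers of index `0` or `> s` are trivial. -/
structure IsStratified (L : Type) [LieRing L] [LieAlgebra ℝ L]
    (s : ℕ) (V : ℕ → Submodule ℝ L) : Prop where
  pos : 0 < s
  last_ne_bot : V s ≠ ⊥
  zero_bot : V 0 = ⊥
  gt_bot : ∀ j, s < j → V j = ⊥
  iSup_eq_top : (⨆ j, V j) = ⊤
  indep : ∀ j, Disjoint (V j) (⨆ k, ⨆ _ : k ≠ j, V k)
  layer : ∀ j, 1 ≤ j → j < s → lieSpan (V 1) (V j) = V (j + 1)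
  last : lieSpan (V 1) (V s) = ⊥

/-- `X : Fin m → L` is a basis of the first layer `V 1`. -/
def IsBasisOfV1 {L : Type} [LieRing L] [LieAlgebra ℝ L]
    (V : ℕ → Submodule ℝ L) {m : ℕ} (X : Fin m → L) : Prop :=
  (∀ i, X i ∈ V 1) ∧ LinearIndependent ℝ X ∧ Submodule.span ℝ (Set.range X) = V 1

/-- A stratified Lie algebra is of type `(⋆)` if some basis `{X₁,…,Xₘ}` of `V 1`
satisfies `ad_{Xᵢ}² Xⱼ = 0` for all `i, j`. -/
def IsTypeStar {L : Type} [LieRing L] [LieAlgebra ℝ L]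
    (V : ℕ → Submodule ℝ L) : Prop :=
  ∃ (m : ℕ) (X : Fin m → L), IsBasisOfV1 V X ∧ ∀ i j, ⁅X i, ⁅X i, X j⁆⁆ = 0

/-- A stratified Lie algebra is of type `(◇)` if for every Lie subalgebra `h` such that
`h ∩ V 1` has codimension `1` in `V 1` there is a basis `{X₁,…,Xₘ}` of `V 1` with
`ad_{Xᵢ}² Xⱼ ∈ h` and `ad_{ad_{Xᵢ}^k Xⱼ}² (Xᵢ) ∈ h` for all `i, j` and all `k ≥ 2`. -/
def IsTypeDiamond {L : Type} [LieRing L] [LieAlgebra ℝ L]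
    (V : ℕ → Submodule ℝ L) : Prop :=
  ∀ h : LieSubalgebra ℝ L,
    Module.finrank ℝ ↥(h.toSubmodule ⊓ V 1) + 1 = Module.finrank ℝ ↥(V 1) →
    ∃ (m : ℕ) (X : Fin m → L), IsBasisOfV1 V X ∧
      ∀ i j, ⁅X i, ⁅X i, X j⁆⁆ ∈ h ∧
        ∀ k : ℕ, 2 ≤ k →
          ⁅((LieAlgebra.ad ℝ L (X i)) ^ k) (X j),
            ⁅((LieAlgebra.ad ℝ L (X i)) ^ k) (X j), X i⁆⁆ ∈ h

/-- If a stratified Lie algebra `g` of type `(◇)` admits a step-2 subalgebra `h`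
(i.e., one whose third layer is trivial: `h ⊓ V 3 = ⊥`) such that `h ∩ V 1` has
codimension `1` in `V 1`, then `g` is of type `(⋆)`. -/
theorem typeDiamond_with_step_two_codim_one_subalgebra_is_typeStar
    (L : Type) [LieRing L] [LieAlgebra ℝ L] [FiniteDimensional ℝ L]
    (s : ℕ) (V : ℕ → Submodule ℝ L) (hst : IsStratified L s V)
    (hdiamond : IsTypeDiamond V)
    (h : LieSubalgebra ℝ L)
    (hcodim : Module.finrank ℝ ↥(h.toSubmodule ⊓ V 1) + 1 = Module.finrank ℝ ↥(V 1))
    (hstep2 : h.toSubmodule ⊓ V 3 = ⊥) :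
    IsTypeStar V := by
  obtain ⟨m, X, hbasis, hprop⟩ := hdiamond h hcodim
  refine ⟨m, X, hbasis, fun i j => ?_⟩
  have hXi := hbasis.1 i
  have hXj := hbasis.1 j
  have hb : ⁅X i, X j⁆ ∈ lieSpan (V 1) (V 1) :=
    Submodule.subset_span ⟨_, hXi, _, hXj, rfl⟩
  have hV3 : ⁅X i, ⁅X i, X j⁆⁆ ∈ V 3 := by
    rcases lt_or_ge s 2 with hs | hs
    · have hs1 : s = 1 := by have := hst.pos; omega
      have hbot : lieSpan (V 1) (V 1) = ⊥ := by have := hst.last; rwa [hs1] at this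
      rw [hbot, Submodule.mem_bot] at hb
      rw [hb]
      simp only [lie_zero]
      exact zero_mem _
    · have h2 : lieSpan (V 1) (V 1) = V 2 := hst.layer 1 le_rfl (by omega)
      have hb2 : ⁅X i, X j⁆ ∈ V 2 := h2 ▸ hb
      have hbb : ⁅X i, ⁅X i, X j⁆⁆ ∈ lieSpan (V 1) (V 2) :=
        Submodule.subset_span ⟨_, hXi, _, hb2, rfl⟩
      rcases lt_or_ge s 3 with hs3 | hs3
      · have hs2 : s = 2 := by omega
        have hbot : lieSpan (V 1) (V 2) = ⊥ := by have := hst.last; rwa [hs2] at this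
        rw [hbot, Submodule.mem_bot] at hbb
        rw [hbb]; exact zero_mem _
      · have h3 : lieSpan (V 1) (V 2) = V 3 := hst.layer 2 (by omega) (by omega)
        exact h3 ▸ hbb
  have hmem : ⁅X i, ⁅X i, X j⁆⁆ ∈ h.toSubmodule ⊓ V 3 :=
    ⟨(hprop i j).1, hV3⟩
  rw [hstep2, Submodule.mem_bot] at hmem
  exact hmem
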